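/- Let a ∈ ℝⁿ with all coordinates strictly positive and n ≥ 2. Then min over x ∈ [−1,1]ⁿ of the function f(x) = (aᵀx)² + max_{i∈[n]} ( aᵢ√(1−xᵢ²) − ∑_{j≠i} aⱼ√(1−xⱼ²) )₊² equals zero if and only if a is balanced, i.e., aᵢ ≤ ∑_{j≠i} aⱼ for all i ∈ [n]. -/

import Mathlib

open Finset

private lemma stmt9_key (p1 p2 q1 q2 A S : ℝ) (hp : p1^2 + p2^2 = A^2) (hq : q1^2 + q2^2 ≤ S^2)
    (hp2 : 0 ≤ p2) (hq2 : 0 ≤ q2) (hS : 0 < S) (hAS : S < A) :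
    (A - S)^2 ≤ (p1 - q1)^2 + (max (p2 - q2) 0)^2 := by
  have hA : 0 < A := hS.trans hAS
  rcases le_or_gt q2 p2 with h | h
  · rw [max_eq_left (by linarith)]
    have hc : 2*(p1*q1+p2*q2) ≤ 2*A*S - S^2 + (q1^2+q2^2) := by
      rcases le_or_gt (p1*q1+p2*q2) 0 with hc0 | hc0
      · nlinarith [mul_pos hS (show (0:ℝ) < A - S by linarith), sq_nonneg q1, sq_nonneg q2,
          mul_pos hS hS]
      · have hR : 0 < 2*A*S - S^2 + (q1^2+q2^2) := by
          nlinarith [mul_pos hS (show (0:ℝ) < A - S by linarith), sq_nonneg q1, sq_nonneg q2,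
            mul_pos hS hS]
        nlinarith [sq_nonneg (p1*q2 - p2*q1),
          mul_nonneg (sub_nonneg.2 hq)
            (sub_nonneg.2 (show q1^2+q2^2 ≤ (2*A-S)^2 by nlinarith)), hR, hc0]
    nlinarith [hc]
  · rw [max_eq_right (by linarith)]
    have hq2S : q2^2 ≤ S^2 := by nlinarith [sq_nonneg q1]
    have hAq : (0:ℝ) < A^2 - q2^2 := by nlinarith
    set α0 := Real.sqrt (A^2 - q2^2) with hα0
    set β0 := Real.sqrt (S^2 - q2^2) with hβ0
    have hα0sq : α0^2 = A^2 - q2^2 := Real.sq_sqrt hAq.le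
    have hβ0sq : β0^2 = S^2 - q2^2 := Real.sq_sqrt (by linarith)
    have hβα : β0 ≤ α0 := Real.sqrt_le_sqrt (by nlinarith)
    have hq1β : |q1| ≤ β0 := by
      rw [← Real.sqrt_sq_eq_abs]; exact Real.sqrt_le_sqrt (by linarith)
    have hp1α : α0 ≤ |p1| := by
      rw [← Real.sqrt_sq_eq_abs]
      exact Real.sqrt_le_sqrt (by nlinarith)
    have hprod : α0 * β0 ≤ A*S - q2^2 := by
      rw [hα0, hβ0, ← Real.sqrt_mul (by linarith)]
      calc Real.sqrt ((A^2 - q2^2) * (S^2 - q2^2)) ≤ Real.sqrt ((A*S - q2^2)^2) := by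
            apply Real.sqrt_le_sqrt; nlinarith [sq_nonneg (q2*(A-S))]
        _ = A*S - q2^2 := Real.sqrt_sq (by nlinarith)
    have step3 : (A-S)^2 ≤ (α0 - β0)^2 := by nlinarith
    have step1 : (α0 - β0)^2 ≤ (|p1| - |q1|)^2 := by
      have h1 : 0 ≤ α0 - β0 := by linarith
      have h2 : α0 - β0 ≤ |p1| - |q1| := by linarith
      exact pow_le_pow_left₀ h1 h2 2
    have step2 : (|p1| - |q1|)^2 ≤ (p1 - q1)^2 := by
      have habs : p1*q1 ≤ |p1| * |q1| := by rw [← abs_mul]; exact le_abs_self _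
      have e1 : (|p1| - |q1|)^2 = p1^2 - 2 * |p1| * |q1| + q1^2 := by
        rw [sub_sq, sq_abs, sq_abs]
      have e2 : (p1 - q1)^2 = p1^2 - 2*(p1*q1) + q1^2 := by ring
      linarith
    have h00 : ((0:ℝ))^2 = 0 := by norm_num
    linarith

private lemma stmt9_circle {n : ℕ} (t : Finset (Fin n)) (a u v : Fin n → ℝ)
    (h : ∀ i ∈ t, u i ^ 2 + v i ^ 2 = 1) (ha : ∀ i ∈ t, 0 ≤ a i) :
    (∑ i ∈ t, a i * u i)^2 + (∑ i ∈ t, a i * v i)^2 ≤ (∑ i ∈ t, a i)^2 := by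
  set z : Fin n → ℂ := fun i => ⟨a i * u i, a i * v i⟩ with hz
  have hre : (∑ i ∈ t, z i).re = ∑ i ∈ t, a i * u i := by
    rw [Complex.re_sum]
  have him : (∑ i ∈ t, z i).im = ∑ i ∈ t, a i * v i := by
    rw [Complex.im_sum]
  have hnorm : ‖∑ i ∈ t, z i‖ ≤ ∑ i ∈ t, a i := by
    refine le_trans (norm_sum_le _ _) (Finset.sum_le_sum fun i hi => ?_)
    have : ‖z i‖ = Real.sqrt ((a i * u i)^2 + (a i * v i)^2) := by
      rw [Complex.norm_def, Complex.normSq_mk]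
      ring_nf
    rw [this]
    have : (a i * u i)^2 + (a i * v i)^2 = (a i)^2 := by
      have := h i hi; nlinarith [this]
    rw [this, Real.sqrt_sq (ha i hi)]
  have hsq : ‖∑ i ∈ t, z i‖^2 ≤ (∑ i ∈ t, a i)^2 :=
    pow_le_pow_left₀ (norm_nonneg _) hnorm 2
  calc (∑ i ∈ t, a i * u i)^2 + (∑ i ∈ t, a i * v i)^2
      = Complex.normSq (∑ i ∈ t, z i) := by
        rw [Complex.normSq_apply, hre, him]; ring
    _ = ‖∑ i ∈ t, z i‖^2 := by rw [← Complex.sq_norm]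
    _ ≤ _ := hsq

open Finset in
/-- Let a ∈ ℝⁿ₊₊, n ≥ 2. Then the minimum over x ∈ [−1,1]ⁿ of
f(x) = (aᵀx)² + max_i ( aᵢ√(1−xᵢ²) − ∑_{j≠i} aⱼ√(1−xⱼ²) )₊² equals zero if and only if
a is balanced, i.e. aᵢ ≤ ∑_{j≠i} aⱼ for all i. -/
theorem stmt_9 (n : ℕ) (hn : 2 ≤ n) (a : Fin n → ℝ) (ha : ∀ i, 0 < a i) :
    sInf ((fun x : Fin n → ℝ =>
        (∑ i, a i * x i) ^ 2 +
          ⨆ i : Fin n, (max (a i * Real.sqrt (1 - x i ^ 2) -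
            ∑ j ∈ univ.erase i, a j * Real.sqrt (1 - x j ^ 2)) 0) ^ 2) ''
        {x : Fin n → ℝ | ∀ i, x i ∈ Set.Icc (-1 : ℝ) 1}) = 0 ↔
      ∀ i, a i ≤ ∑ j ∈ univ.erase i, a j := by
  have hne : Nonempty (Fin n) := ⟨⟨0, by omega⟩⟩
  set F : (Fin n → ℝ) → ℝ := fun x =>
    (∑ i, a i * x i) ^ 2 +
      ⨆ i : Fin n, (max (a i * Real.sqrt (1 - x i ^ 2) -
        ∑ j ∈ univ.erase i, a j * Real.sqrt (1 - x j ^ 2)) 0) ^ 2 with hF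
  set C : Set (Fin n → ℝ) := {x : Fin n → ℝ | ∀ i, x i ∈ Set.Icc (-1 : ℝ) 1} with hC
  have h0C : (fun _ => (0:ℝ)) ∈ C := by
    intro i; constructor <;> norm_num
  have hFnonneg : ∀ x, 0 ≤ F x := by
    intro x
    exact add_nonneg (sq_nonneg _) (Real.iSup_nonneg fun i => sq_nonneg _)
  have hEne : ((F '' C)).Nonempty := ⟨F (fun _ => 0), Set.mem_image_of_mem _ h0C⟩
  -- lower bound for unbalanced case
  have hkey : ∀ i : Fin n, (∑ j ∈ univ.erase i, a j) < a i →
      ∀ x ∈ C, (a i - ∑ j ∈ univ.erase i, a j)^2 ≤ F x := by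
    intro i hi x hx
    set S := ∑ j ∈ univ.erase i, a j with hS
    have hSpos : 0 < S := by
      apply Finset.sum_pos (fun j _ => ha j)
      have : 1 ≤ (univ.erase i).card := by
        rw [Finset.card_erase_of_mem (mem_univ i), Finset.card_univ, Fintype.card_fin]
        omega
      exact Finset.card_pos.mp (by omega)
    set s : Fin n → ℝ := fun j => Real.sqrt (1 - x j ^ 2) with hs
    have hxs : ∀ j, x j ^ 2 + s j ^ 2 = 1 := by
      intro j
      have h1 := (hx j).1; have h2 := (hx j).2
      have : s j ^ 2 = 1 - x j ^ 2 := Real.sq_sqrt (by nlinarith)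
      linarith
    have hp : (a i * x i)^2 + (a i * s i)^2 = (a i)^2 := by
      have := hxs i; nlinarith [this]
    have hq : (-(∑ j ∈ univ.erase i, a j * x j))^2 + (∑ j ∈ univ.erase i, a j * s j)^2
        ≤ S^2 := by
      rw [neg_sq]
      exact stmt9_circle _ a x s (fun j _ => hxs j) (fun j _ => (ha j).le)
    have hkey2 := stmt9_key (a i * x i) (a i * s i) (-(∑ j ∈ univ.erase i, a j * x j))
      (∑ j ∈ univ.erase i, a j * s j) (a i) S hp hq
      (mul_nonneg (ha i).le (Real.sqrt_nonneg _))
      (Finset.sum_nonneg fun j _ => mul_nonneg (ha j).le (Real.sqrt_nonneg _)) hSpos hi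
    have hT : a i * x i - -(∑ j ∈ univ.erase i, a j * x j) = ∑ j, a j * x j := by
      rw [sub_neg_eq_add]
      exact Finset.add_sum_erase univ (fun j => a j * x j) (mem_univ i)
    rw [hT] at hkey2
    simp only [hs] at hkey2
    refine le_trans hkey2 (add_le_add_right ?_ _)
    exact le_ciSup (f := fun i : Fin n => (max (a i * Real.sqrt (1 - x i ^ 2) -
      ∑ j ∈ univ.erase i, a j * Real.sqrt (1 - x j ^ 2)) 0) ^ 2)
      (Set.Finite.bddAbove (Set.finite_range _)) i
  constructor
  · intro h0 i
    by_contra hlt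
    push_neg at hlt
    have hge : (a i - ∑ j ∈ univ.erase i, a j)^2 ≤ sInf (F '' C) := by
      apply le_csInf hEne
      rintro y ⟨x, hx, rfl⟩
      exact hkey i hlt x hx
    rw [h0] at hge
    nlinarith [hge, hlt]
  · intro hbal
    have hF0 : F (fun _ => 0) = 0 := by
      rw [hF]
      simp only
      have h1 : Real.sqrt (1 - (0:ℝ)^2) = 1 := by norm_num
      have hsum0 : (∑ i : Fin n, a i * (0:ℝ)) = 0 := by simp
      have hterm : ∀ i : Fin n,
          (max (a i * Real.sqrt (1 - (0:ℝ)^2) -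
            ∑ j ∈ univ.erase i, a j * Real.sqrt (1 - (0:ℝ)^2)) 0) ^ 2 = 0 := by
        intro i
        rw [h1]
        simp only [mul_one]
        rw [max_eq_right (by simpa using sub_nonpos.2 (hbal i))]
        norm_num
      have hsup : (⨆ i : Fin n,
          (max (a i * Real.sqrt (1 - (0:ℝ)^2) -
            ∑ j ∈ univ.erase i, a j * Real.sqrt (1 - (0:ℝ)^2)) 0) ^ 2) = 0 := by
        apply le_antisymm
        · exact Real.iSup_le (fun i => (hterm i).le) le_rfl
        · exact Real.iSup_nonneg fun i => sq_nonneg _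
      rw [hsum0, hsup]
      norm_num
    apply le_antisymm
    · refine csInf_le ⟨0, ?_⟩ ?_
      · rintro y ⟨x, _, rfl⟩; exact hFnonneg x
      · rw [← hF0]; exact Set.mem_image_of_mem _ h0C
    · apply le_csInf hEne
      rintro y ⟨x, _, rfl⟩
      exact hFnonneg x
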